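/- For every integer n ≥ 0, the central Delannoy number D(n) = D(n,n) satisfies D(n) = 1 - ∑_{r=1}^{n} (-1)^r · C(n+1, r) · D(n, n-r). -/

import Mathlib

open Finset

lemma aux_choose (m r i : ℕ) : m.choose r * (m - r).choose i = m.choose i * (m - i).choose r := by
  rcases le_or_gt i m with hi | hi
  · rcases le_or_gt (r + i) m with h | h
    · have hr : r ≤ m := by omega
      have hi2 : i ≤ m - r := by omega
      have key := Nat.choose_mul (n := m) hi2
      rw [Nat.choose_symm hr] at key
      rw [show m - r - i = (m - i) - r by omega, Nat.choose_symm (by omega : r ≤ m - i)] at key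
      exact key
    · rcases le_or_gt r m with hr | hr
      · rw [Nat.choose_eq_zero_of_lt (show m - r < i by omega),
          Nat.choose_eq_zero_of_lt (show m - i < r by omega)]
        ring
      · rw [Nat.choose_eq_zero_of_lt hr, Nat.choose_eq_zero_of_lt (show m - i < r by omega)]
        ring
  · rw [Nat.choose_eq_zero_of_lt (show m - r < i by omega),
      Nat.choose_eq_zero_of_lt (show m < i by omega)]
    ring

lemma lemA (m i : ℕ) (h : i ≤ m) :
    ∑ r ∈ range (m + 1), (-1 : ℤ) ^ r * (m.choose r : ℤ) * ((m - r).choose i : ℤ) =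
      if i = m then 1 else 0 := by
  have step : ∀ r, (-1 : ℤ) ^ r * (m.choose r : ℤ) * ((m - r).choose i : ℤ) =
      (m.choose i : ℤ) * ((-1 : ℤ) ^ r * ((m - i).choose r : ℤ)) := by
    intro r
    have h2 : ((m.choose r : ℤ)) * ((m - r).choose i : ℤ) =
        (m.choose i : ℤ) * ((m - i).choose r : ℤ) := by exact_mod_cast aux_choose m r i
    linear_combination ((-1 : ℤ) ^ r) * h2
  simp_rw [step, ← Finset.mul_sum]
  have hsub : ∑ r ∈ range (m + 1), (-1 : ℤ) ^ r * ((m - i).choose r : ℤ) =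
      ∑ r ∈ range (m - i + 1), (-1 : ℤ) ^ r * ((m - i).choose r : ℤ) := by
    symm
    apply Finset.sum_subset
    · apply Finset.range_subset_range.2; omega
    · intro x _ hx
      rw [Nat.choose_eq_zero_of_lt (by simp at hx ⊢; omega)]
      ring
  rw [hsub, Int.alternating_sum_range_choose]
  rcases eq_or_ne i m with rfl | hne
  · simp
  · rw [if_neg hne, if_neg (by omega)]; ring

lemma lemT (n : ℕ) : ∀ i ≤ n,
    ∑ r ∈ range (n + 1), (-1 : ℤ) ^ r * ((n + 1).choose r : ℤ) * ((n - r).choose i : ℤ) =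
      (-1) ^ (n - i) := by
  induction n with
  | zero => intro i hi; interval_cases i; simp
  | succ n ih =>
    intro i hi
    rcases eq_or_lt_of_le hi with rfl | hlt
    · -- i = n + 1 : only r = 0 contributes
      rw [Finset.sum_eq_single 0]
      · simp
      · intro r hr hr0
        rw [Nat.choose_eq_zero_of_lt (show n + 1 - r < n + 1 by omega)]
        push_cast; ring
      · simp
    · have hin : i ≤ n := by omega
      rw [Finset.sum_range_succ']
      have hA := lemA (n + 1) i (by omega)
      rw [Finset.sum_range_succ'] at hA
      have hsplit : ∀ r ∈ range (n + 1),
          (-1 : ℤ) ^ (r + 1) * ((n + 2).choose (r + 1) : ℤ) * ((n + 1 - (r + 1)).choose i : ℤ) =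
            (-1 : ℤ) ^ (r + 1) * ((n + 1).choose (r + 1) : ℤ) * ((n + 1 - (r + 1)).choose i : ℤ)
            - (-1 : ℤ) ^ r * ((n + 1).choose r : ℤ) * ((n - r).choose i : ℤ) := by
        intro r _
        have hp : (n + 2).choose (r + 1) = (n + 1).choose r + (n + 1).choose (r + 1) :=
          Nat.choose_succ_succ' (n + 1) r
        rw [hp, show n + 1 - (r + 1) = n - r by omega]
        push_cast; ring
      rw [Finset.sum_congr rfl hsplit, Finset.sum_sub_distrib, ih i hin]
      rw [if_neg (by omega : ¬ i = n + 1)] at hA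
      have h2 : (∑ r ∈ range (n + 1),
          (-1 : ℤ) ^ (r + 1) * ((n + 1).choose (r + 1) : ℤ) * ((n + 1 - (r + 1)).choose i : ℤ))
          = - ((-1 : ℤ) ^ 0 * ((n + 1).choose 0 : ℤ) * ((n + 1 - 0).choose i : ℤ)) := by
        linarith [hA]
      rw [h2]
      have : (-1 : ℤ) ^ (n + 1 - i) = -(-1 : ℤ) ^ (n - i) := by
        rw [show n + 1 - i = (n - i) + 1 by omega, pow_succ]; ring
      rw [this]
      simp
      ring

/-- The Delannoy numbers: `D(p,q) = ∑_{i=0}^{p} C(p,i) C(q,i) 2^i`. -/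
def delannoy (p q : ℕ) : ℕ :=
  ∑ i ∈ Finset.range (p + 1), p.choose i * q.choose i * 2 ^ i

lemma mainsum (n : ℕ) :
    ∑ r ∈ range (n + 1), (-1 : ℤ) ^ r * ((n + 1).choose r : ℤ) * (delannoy n (n - r) : ℤ) = 1 := by
  have expand : ∀ r, (delannoy n (n - r) : ℤ) =
      ∑ i ∈ range (n + 1), (n.choose i : ℤ) * ((n - r).choose i : ℤ) * 2 ^ i := by
    intro r; unfold delannoy; push_cast; rfl
  calc ∑ r ∈ range (n + 1), (-1 : ℤ) ^ r * ((n + 1).choose r : ℤ) * (delannoy n (n - r) : ℤ)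
      = ∑ r ∈ range (n + 1), ∑ i ∈ range (n + 1),
          (n.choose i : ℤ) * 2 ^ i * ((-1 : ℤ) ^ r * ((n + 1).choose r : ℤ) * ((n - r).choose i : ℤ)) := by
        refine Finset.sum_congr rfl fun r _ => ?_
        rw [expand r, Finset.mul_sum]
        exact Finset.sum_congr rfl fun i _ => by ring
    _ = ∑ i ∈ range (n + 1), (n.choose i : ℤ) * 2 ^ i *
          (∑ r ∈ range (n + 1), (-1 : ℤ) ^ r * ((n + 1).choose r : ℤ) * ((n - r).choose i : ℤ)) := by
        rw [Finset.sum_comm]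
        exact Finset.sum_congr rfl fun i _ => by rw [Finset.mul_sum]
    _ = ∑ i ∈ range (n + 1), (n.choose i : ℤ) * 2 ^ i * (-1) ^ (n - i) := by
        refine Finset.sum_congr rfl fun i hi => ?_
        rw [lemT n i (by simpa using Nat.lt_succ_iff.mp (Finset.mem_range.mp hi))]
    _ = ((2 : ℤ) + (-1)) ^ n := by
        rw [add_pow]
        exact Finset.sum_congr rfl fun i _ => by ring
    _ = 1 := by norm_num

/-- A recursive relation for central Delannoy numbers:
`D(n) = D(n,n) = 1 - ∑_{r=1}^{n} (-1)^r · C(n+1, r) · D(n, n-r)`. -/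
theorem centralDelannoy_recursion' (n : ℕ) :
    (delannoy n n : ℤ) =
      1 - ∑ r ∈ Finset.Icc 1 n,
            (-1 : ℤ) ^ r * ((n + 1).choose r : ℤ) * (delannoy n (n - r) : ℤ) := by
  have h := mainsum n
  rw [Finset.range_eq_Ico, Finset.sum_eq_sum_Ico_succ_bot (Nat.succ_pos n)] at h
  rw [Nat.succ_eq_add_one, Finset.Ico_add_one_right_eq_Icc] at h
  have h01 : Finset.Icc 1 n = Finset.Icc (0 + 1) n := by norm_num
  simp only [pow_zero, Nat.choose_zero_right, Nat.cast_one, one_mul, Nat.sub_zero] at h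
  have : Finset.Icc (0 + 1) n = Finset.Icc 1 n := by norm_num
  rw [this] at h
  linarith
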